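/- Let G, H ∈ ℝ^{N×N} be matrices such that G is invertible and H ≠ 0, and let Ĝ, Ĥ be random matrices in ℝ^{N×N} (defined on a probability space (Ω, P)) such that Ĝ is invertible almost surely. Then for every ε > 0, P(‖G⁻¹H − Ĝ⁻¹Ĥ‖ > ε) ≤ P(‖H − Ĥ‖ > (ε/τ_ε) ‖H‖) + P(‖G − Ĝ‖ > (ε/τ_ε) ‖G⁻¹‖⁻¹), where τ_ε = 2‖G⁻¹‖‖H‖ + ε and ‖·‖ denotes the operator norm of a matrix induced by the Euclidean norm. -/
import Mathlib

set_option maxHeartbeats 1000000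
set_option synthInstance.maxHeartbeats 200000

open MeasureTheory ProbabilityTheory Matrix

/-- The operator norm of a real square matrix induced by the Euclidean norm. -/
noncomputable def opNorm {N : ℕ} (M : Matrix (Fin N) (Fin N) ℝ) : ℝ :=
  ‖Matrix.toEuclideanCLM (𝕜 := ℝ) M‖

lemma opNorm_nonneg {N : ℕ} (M : Matrix (Fin N) (Fin N) ℝ) : 0 ≤ opNorm M :=
  norm_nonneg _

lemma opNorm_mul_le {N : ℕ} (A B : Matrix (Fin N) (Fin N) ℝ) :
    opNorm (A * B) ≤ opNorm A * opNorm B := by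
  unfold opNorm
  rw [_root_.map_mul]
  exact norm_mul_le _ _

lemma opNorm_add_le {N : ℕ} (A B : Matrix (Fin N) (Fin N) ℝ) :
    opNorm (A + B) ≤ opNorm A + opNorm B := by
  unfold opNorm
  rw [_root_.map_add]
  exact norm_add_le _ _

lemma opNorm_neg {N : ℕ} (A : Matrix (Fin N) (Fin N) ℝ) : opNorm (-A) = opNorm A := by
  unfold opNorm
  rw [_root_.map_neg]
  exact norm_neg _

lemma opNorm_self_le_add {N : ℕ} (A B : Matrix (Fin N) (Fin N) ℝ) :
    opNorm A ≤ opNorm B + opNorm (B - A) := by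
  calc opNorm A = opNorm (B + -(B - A)) := by rw [← sub_eq_add_neg, sub_sub_cancel]
    _ ≤ opNorm B + opNorm (-(B - A)) := opNorm_add_le _ _
    _ = opNorm B + opNorm (B - A) := by rw [opNorm_neg]

lemma opNorm_pos {N : ℕ} {M : Matrix (Fin N) (Fin N) ℝ} (hM : M ≠ 0) : 0 < opNorm M := by
  have hf : Matrix.toEuclideanCLM (𝕜 := ℝ) M ≠ 0 := by
    intro h0
    apply hM
    have := congrArg (Matrix.toEuclideanCLM (𝕜 := ℝ)).symm h0
    simpa using this
  exact norm_pos_iff.mpr hf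

lemma key_det {N : ℕ} (hN : 0 < N) (G H Gh Hh : Matrix (Fin N) (Fin N) ℝ)
    (hG : IsUnit G) (hH : H ≠ 0) (hGh : IsUnit Gh)
    (ε τ : ℝ) (hε : 0 < ε) (hτ : τ = 2 * opNorm G⁻¹ * opNorm H + ε)
    (h1 : opNorm (H - Hh) ≤ (ε / τ) * opNorm H)
    (h2 : opNorm (G - Gh) ≤ (ε / τ) * (opNorm G⁻¹)⁻¹) :
    opNorm (G⁻¹ * H - Gh⁻¹ * Hh) ≤ ε := by
  haveI : NeZero N := ⟨hN.ne'⟩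
  have hGdet := (Matrix.isUnit_iff_isUnit_det G).mp hG
  have hGhdet := (Matrix.isUnit_iff_isUnit_det Gh).mp hGh
  have hGinv_ne : G⁻¹ ≠ 0 := by
    intro h0
    have h1' : G⁻¹ * G = 1 := Matrix.nonsing_inv_mul G hGdet
    rw [h0, zero_mul] at h1'
    exact one_ne_zero h1'.symm
  set a := opNorm G⁻¹ with ha
  set h := opNorm H with hh
  set b := opNorm Gh⁻¹ with hb
  set δ := ε / τ with hδ
  have hapos : 0 < a := opNorm_pos hGinv_ne
  have hhpos : 0 < h := opNorm_pos hH
  have hτpos : 0 < τ := by rw [hτ]; positivity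
  have hδpos : 0 < δ := div_pos hε hτpos
  have hδlt : δ < 1 := by
    rw [hδ, div_lt_one hτpos, hτ]; nlinarith
  have hετ : δ * τ = ε := div_mul_cancel₀ ε hτpos.ne'
  have hbnn : 0 ≤ b := opNorm_nonneg _
  -- key identity : Gh⁻¹ * (G - Gh) * G⁻¹ = Gh⁻¹ - G⁻¹
  have hid : Gh⁻¹ * (G - Gh) * G⁻¹ = Gh⁻¹ - G⁻¹ := by
    rw [Matrix.mul_sub, Matrix.sub_mul, Matrix.mul_assoc,
      Matrix.mul_nonsing_inv G hGdet, Matrix.mul_one, Matrix.nonsing_inv_mul Gh hGhdet,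
      Matrix.one_mul]
  have e3 : opNorm (Gh⁻¹ * (G - Gh) * G⁻¹) ≤ b * δ := by
    calc opNorm (Gh⁻¹ * (G - Gh) * G⁻¹) ≤ opNorm (Gh⁻¹ * (G - Gh)) * a :=
          opNorm_mul_le _ _
      _ ≤ b * opNorm (G - Gh) * a :=
          mul_le_mul_of_nonneg_right (opNorm_mul_le _ _) hapos.le
      _ ≤ b * (δ * a⁻¹) * a :=
          mul_le_mul_of_nonneg_right (mul_le_mul_of_nonneg_left h2 hbnn) hapos.le
      _ = b * δ := by field_simp
  -- bound on b
  have hbbound : b * (1 - δ) ≤ a := by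
    have e1 : Gh⁻¹ = G⁻¹ + Gh⁻¹ * (G - Gh) * G⁻¹ := by rw [hid]; abel
    have e2 : b ≤ a + opNorm (Gh⁻¹ * (G - Gh) * G⁻¹) := by
      calc b = opNorm (G⁻¹ + Gh⁻¹ * (G - Gh) * G⁻¹) := by rw [hb, ← e1]
        _ ≤ a + opNorm (Gh⁻¹ * (G - Gh) * G⁻¹) := opNorm_add_le _ _
    nlinarith
  -- decomposition
  have hdec : G⁻¹ * H - Gh⁻¹ * Hh =
      G⁻¹ * (H - Hh) + -((Gh⁻¹ * (G - Gh) * G⁻¹) * Hh) := by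
    rw [hid, Matrix.mul_sub, Matrix.sub_mul]
    abel
  have hHh : opNorm Hh ≤ h + δ * h := by
    have := opNorm_self_le_add Hh H
    linarith
  have hterm1 : opNorm (G⁻¹ * (H - Hh)) ≤ a * (δ * h) := by
    calc opNorm (G⁻¹ * (H - Hh)) ≤ a * opNorm (H - Hh) := opNorm_mul_le _ _
      _ ≤ a * (δ * h) := mul_le_mul_of_nonneg_left h1 hapos.le
  have hterm2 : opNorm ((Gh⁻¹ * (G - Gh) * G⁻¹) * Hh) ≤ b * δ * (h + δ * h) := by
    calc opNorm ((Gh⁻¹ * (G - Gh) * G⁻¹) * Hh)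
        ≤ opNorm (Gh⁻¹ * (G - Gh) * G⁻¹) * opNorm Hh := opNorm_mul_le _ _
      _ ≤ b * δ * (h + δ * h) := by
          have hn := opNorm_nonneg (Gh⁻¹ * (G - Gh) * G⁻¹)
          have hn2 := opNorm_nonneg Hh
          nlinarith [mul_nonneg hbnn hδpos.le]
  have htotal : opNorm (G⁻¹ * H - Gh⁻¹ * Hh) ≤ a * (δ * h) + b * δ * (h + δ * h) := by
    calc opNorm (G⁻¹ * H - Gh⁻¹ * Hh)
        = opNorm (G⁻¹ * (H - Hh) + -((Gh⁻¹ * (G - Gh) * G⁻¹) * Hh)) := by rw [hdec]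
      _ ≤ opNorm (G⁻¹ * (H - Hh)) + opNorm (-((Gh⁻¹ * (G - Gh) * G⁻¹) * Hh)) :=
          opNorm_add_le _ _
      _ = opNorm (G⁻¹ * (H - Hh)) + opNorm ((Gh⁻¹ * (G - Gh) * G⁻¹) * Hh) := by
          rw [opNorm_neg]
      _ ≤ a * (δ * h) + b * δ * (h + δ * h) := by linarith
  -- final arithmetic
  have hkey : ε - ε * δ = 2 * a * h * δ := by
    have he : δ * (2 * a * h + ε) = ε := by rw [← hτ]; exact hετ
    nlinarith
  have final : a * (δ * h) + b * δ * (h + δ * h) ≤ ε := by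
    nlinarith [mul_le_mul_of_nonneg_right hbbound
        (by positivity : (0:ℝ) ≤ δ * h * (1 + δ)),
      mul_pos hδpos hhpos]
  linarith

/-- **Lemma 4.4:** probabilistic perturbation bound for the product `G⁻¹ * H`. -/
theorem perturbation_bound_prob
    {N : ℕ} (hN : 0 < N)
    {Ω : Type*} [MeasurableSpace Ω] (P : Measure Ω) [IsProbabilityMeasure P]
    (G H : Matrix (Fin N) (Fin N) ℝ)
    (hG : IsUnit G) (hH : H ≠ 0)
    (Ghat Hhat : Ω → Matrix (Fin N) (Fin N) ℝ)
    (hGhat : ∀ᵐ ω ∂P, IsUnit (Ghat ω))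
    (ε : ℝ) (hε : 0 < ε)
    (τ : ℝ) (hτ : τ = 2 * opNorm G⁻¹ * opNorm H + ε) :
    P {ω | ε < opNorm (G⁻¹ * H - (Ghat ω)⁻¹ * Hhat ω)} ≤
      P {ω | (ε / τ) * opNorm H < opNorm (H - Hhat ω)} +
      P {ω | (ε / τ) * (opNorm G⁻¹)⁻¹ < opNorm (G - Ghat ω)} := by
  refine le_trans (measure_mono_ae ?_) (measure_union_le _ _)
  filter_upwards [hGhat] with ω hGhω
  intro hmem
  by_contra hc
  have hc1 : opNorm (H - Hhat ω) ≤ (ε / τ) * opNorm H :=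
    not_lt.mp fun hlt => hc (Or.inl hlt)
  have hc2 : opNorm (G - Ghat ω) ≤ (ε / τ) * (opNorm G⁻¹)⁻¹ :=
    not_lt.mp fun hlt => hc (Or.inr hlt)
  have := key_det hN G H (Ghat ω) (Hhat ω) hG hH hGhω ε τ hε hτ hc1 hc2
  exact absurd hmem (not_lt.mpr this)
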